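/- Let A be a symmetric tensor of order 3 and dimension 2 with a_{111} = a_{222} = 0. Then A is copositive if and only if all entries of A are nonnegative. -/

import Mathlib

open Finset

/-- `A x^m` for an `m`-order `n`-dimensional tensor `A`. -/
noncomputable def tpow {m n : ℕ} (A : (Fin m → Fin n) → ℝ) (x : Fin n → ℝ) : ℝ :=
  ∑ f : Fin m → Fin n, A f * ∏ k, x (f k)

/-- `A` is symmetric: entries invariant under permutations of indices. -/
def SymT {m n : ℕ} (A : (Fin m → Fin n) → ℝ) : Prop :=
  ∀ (σ : Equiv.Perm (Fin m)) (f : Fin m → Fin n), A (f ∘ σ) = A f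

/-- `A` is copositive. -/
def CoposT {m n : ℕ} (A : (Fin m → Fin n) → ℝ) : Prop :=
  ∀ x : Fin n → ℝ, (∀ i, 0 ≤ x i) → 0 ≤ tpow A x

/-- `A` is strictly copositive. -/
def StrictCoposT {m n : ℕ} (A : (Fin m → Fin n) → ℝ) : Prop :=
  ∀ x : Fin n → ℝ, (∀ i, 0 ≤ x i) → x ≠ 0 → 0 < tpow A x

lemma sum8 (g : (Fin 3 → Fin 2) → ℝ) : ∑ f, g f = g ![0,0,0] + g ![0,0,1] + g ![0,1,0] + g ![0,1,1] + g ![1,0,0] + g ![1,0,1] + g ![1,1,0] + g ![1,1,1] := by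
  rw [show (univ : Finset (Fin 3 → Fin 2)) = {![0,0,0], ![0,0,1], ![0,1,0], ![0,1,1], ![1,0,0], ![1,0,1], ![1,1,0], ![1,1,1]} from by decide]
  rw [Finset.sum_insert (by decide), Finset.sum_insert (by decide), Finset.sum_insert (by decide), Finset.sum_insert (by decide), Finset.sum_insert (by decide), Finset.sum_insert (by decide), Finset.sum_insert (by decide), Finset.sum_singleton]
  ring

lemma symEq {A : (Fin 3 → Fin 2) → ℝ} (hA : SymT A) (σ : Equiv.Perm (Fin 3))
    (f g : Fin 3 → Fin 2) (h : f ∘ σ = g) : A g = A f := by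
  rw [← h]; exact hA σ f

theorem stmt14 (A : (Fin 3 → Fin 2) → ℝ) (hA : SymT A)
    (h1 : A ![0, 0, 0] = 0) (h2 : A ![1, 1, 1] = 0) :
    CoposT A ↔ ∀ f : Fin 3 → Fin 2, 0 ≤ A f := by
  have e001 : A ![0,0,1] = A ![1,0,0] :=
    symEq hA (Equiv.swap 0 2) _ _ (by funext i; fin_cases i <;> rfl)
  have e010 : A ![0,1,0] = A ![1,0,0] :=
    symEq hA (Equiv.swap 0 1) _ _ (by funext i; fin_cases i <;> rfl)
  have e011 : A ![0,1,1] = A ![1,1,0] :=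
    symEq hA (Equiv.swap 0 2) _ _ (by funext i; fin_cases i <;> rfl)
  have e101 : A ![1,0,1] = A ![1,1,0] :=
    symEq hA (Equiv.swap 1 2) _ _ (by funext i; fin_cases i <;> rfl)
  set a := A ![1,0,0] with ha
  set b := A ![1,1,0] with hb
  constructor
  · intro hc
    have key : ∀ t : ℝ, 0 ≤ t →
        (0 ≤ 3*a*t + 3*b*t^2 ∧ 0 ≤ 3*a*t^2 + 3*b*t) := by
      intro t ht
      constructor
      · have := hc ![1,t] (by intro i; fin_cases i <;> simp [ht])
        rw [tpow, sum8] at this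
        simp only [h1, h2, e001, e010, e011, e101, ← ha, ← hb,
          Fin.prod_univ_three] at this
        norm_num [Matrix.cons_val_zero, Matrix.cons_val_one, Matrix.head_cons,
          Matrix.cons_val_succ, Matrix.cons_val_two] at this
        nlinarith [this]
      · have := hc ![t,1] (by intro i; fin_cases i <;> simp [ht])
        rw [tpow, sum8] at this
        simp only [h1, h2, e001, e010, e011, e101, ← ha, ← hb,
          Fin.prod_univ_three] at this
        norm_num [Matrix.cons_val_zero, Matrix.cons_val_one, Matrix.head_cons,
          Matrix.cons_val_succ, Matrix.cons_val_two] at this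
        nlinarith [this]
    have hapos : 0 ≤ a := by
      by_contra hneg
      push_neg at hneg
      set t : ℝ := -a / (2*(|b|+1)) with htdef
      have habs : (0:ℝ) < |b| + 1 := by positivity
      have htpos : 0 < t := div_pos (by linarith) (by linarith)
      have hteq : t * (2*(|b|+1)) = -a := by
        rw [htdef]; field_simp
      have h := (key t htpos.le).1
      have hbt : b * t ≤ |b| * t := mul_le_mul_of_nonneg_right (le_abs_self b) htpos.le
      nlinarith [h, hbt, hteq, htpos, abs_nonneg b,
        mul_le_mul_of_nonneg_left hteq.le (abs_nonneg b), sq_nonneg t,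
        mul_pos htpos habs]
    have hbpos : 0 ≤ b := by
      by_contra hneg
      push_neg at hneg
      set t : ℝ := -b / (2*(|a|+1)) with htdef
      have habs : (0:ℝ) < |a| + 1 := by positivity
      have htpos : 0 < t := div_pos (by linarith) (by linarith)
      have hteq : t * (2*(|a|+1)) = -b := by
        rw [htdef]; field_simp
      have h := (key t htpos.le).2
      have hat : a * t ≤ |a| * t := mul_le_mul_of_nonneg_right (le_abs_self a) htpos.le
      nlinarith [h, hat, hteq, htpos, abs_nonneg a,
        mul_le_mul_of_nonneg_left hteq.le (abs_nonneg a), sq_nonneg t,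
        mul_pos htpos habs]
    intro f
    have hf : f = ![f 0, f 1, f 2] := by
      funext i; fin_cases i <;> rfl
    rw [hf]
    have h0 : f 0 = 0 ∨ f 0 = 1 := by omega
    have h1' : f 1 = 0 ∨ f 1 = 1 := by omega
    have h2' : f 2 = 0 ∨ f 2 = 1 := by omega
    rcases h0 with h0|h0 <;> rcases h1' with h1'|h1' <;> rcases h2' with h2'|h2' <;>
      rw [h0, h1', h2'] <;>
      first
        | exact h1.ge | exact h2.ge | exact hapos | exact hbpos
        | (rw [e001]; exact hapos) | (rw [e010]; exact hapos)
        | (rw [e011]; exact hbpos) | (rw [e101]; exact hbpos)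
  · intro hf x hx
    apply Finset.sum_nonneg
    intro f _
    exact mul_nonneg (hf f) (Finset.prod_nonneg fun k _ => hx _)
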